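/- arXiv:2101.12655 — 2 statements merged into one kernel-verified Lean document; each statement's English description precedes it below -/
import Mathlib

section
/- Let R = ℤ_(3)[a₂, a₄] be a polynomial ring over the localization of ℤ at 3, and let C = R[r]/(r³ + a₂r² + a₄r). Then the sequence of C-modules ... → C --·(r²+a₂r+a₄)--> C --·r--> C → R → 0, where the last map is the R-algebra map sending r to 0, is exact; i.e., it is a free resolution of R as a C-module, with the pattern of multiplication by r and by r²+a₂r+a₄ alternating. -/
open MvPolynomial

instance : (Ideal.span {(3 : ℤ)}).IsPrime :=
  (Ideal.span_singleton_prime (by norm_num)).mpr Int.prime_three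

/-- `ℤ` localized at the prime `3`. -/
noncomputable abbrev Zloc3 : Type :=
  Localization.AtPrime (R := ℤ) (Ideal.span {(3 : ℤ)})

/-- `R = ℤ₍₃₎[a₂,a₄]`. -/
noncomputable abbrev Rring : Type := MvPolynomial (Fin 2) Zloc3

/-- the relation `r³ + a₂r² + a₄r`, with `a₂ = X 0`, `a₄ = X 1`, `r = X 2`. -/
noncomputable abbrev rel : MvPolynomial (Fin 3) Zloc3 :=
  (X 2) ^ 3 + X 0 * (X 2) ^ 2 + X 1 * X 2

/-- `C = ℤ₍₃₎[a₂,a₄,r]/(r³ + a₂r² + a₄r)`. -/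
noncomputable abbrev Cring : Type :=
  MvPolynomial (Fin 3) Zloc3 ⧸ Ideal.span {rel}

noncomputable abbrev cmk : MvPolynomial (Fin 3) Zloc3 →+* Cring :=
  Ideal.Quotient.mk _

/-- The augmentation `C → R`, the `ℤ₍₃₎`-algebra map sending `r ↦ 0`,
`a₂ ↦ a₂`, `a₄ ↦ a₄`. -/
noncomputable def aug : Cring →+* Rring :=
  Ideal.Quotient.lift _
    ((aeval (R := Zloc3) ![(X 0 : Rring), X 1, 0]).toRingHom)
    (by
      intro a ha
      rw [Ideal.mem_span_singleton] at ha
      obtain ⟨c, rfl⟩ := ha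
      simp [rel])

lemma hrel_factor : rel = X 2 * ((X 2) ^ 2 + X 0 * X 2 + X 1) := by ring

lemma hqne : ((X 2) ^ 2 + X 0 * X 2 + X 1 : MvPolynomial (Fin 3) Zloc3) ≠ 0 := by
  intro h
  have := congrArg (eval ![0, 1, 0]) h
  simp at this

lemma ker_f :
    RingHom.ker ((aeval (R := Zloc3) ![(X 0 : Rring), X 1, 0]).toRingHom)
      = Ideal.span {(X 2 : MvPolynomial (Fin 3) Zloc3)} := by
  apply le_antisymm
  · intro p hp
    have hmk : (Ideal.Quotient.mk (Ideal.span {(X 2 : MvPolynomial (Fin 3) Zloc3)})).comp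
        (((aeval (R := Zloc3) ![(X 0 : MvPolynomial (Fin 3) Zloc3), X 1]).toRingHom).comp
          (aeval (R := Zloc3) ![(X 0 : Rring), X 1, 0]).toRingHom)
        = Ideal.Quotient.mk _ := by
      apply MvPolynomial.ringHom_ext
      · intro c; simp
      · intro i
        fin_cases i <;> simp
    have h2 := congrArg (fun g => g p) hmk
    simp only [RingHom.comp_apply] at h2
    rw [show ((aeval (R := Zloc3) ![(X 0 : Rring), X 1, 0]).toRingHom) p = 0 from hp] at h2
    rw [← Ideal.Quotient.eq_zero_iff_mem, ← h2]
    simp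
  · rw [Ideal.span_le]
    rintro _ rfl
    simp [RingHom.mem_ker]

/-- The sequence `⋯ → C →(·(r²+a₂r+a₄)) C →(·r) C → R → 0` is exact: the
augmentation is surjective with kernel the ideal `(r)`, the annihilator of `r`
in `C` is the ideal `(r² + a₂r + a₄)`, and the annihilator of `r² + a₂r + a₄`
is the ideal `(r)`; so this 2-periodic sequence is a free resolution of `R`
as a `C`-module. -/
theorem stmt3 :
    Function.Surjective aug ∧
    RingHom.ker aug = Ideal.span {cmk (X 2)} ∧
    (∀ x : Cring, x * cmk (X 2) = 0 ↔
      x ∈ Ideal.span {cmk ((X 2) ^ 2 + X 0 * X 2 + X 1)}) ∧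
    (∀ x : Cring, x * cmk ((X 2) ^ 2 + X 0 * X 2 + X 1) = 0 ↔
      x ∈ Ideal.span {cmk (X 2)}) := by
  have h0 : cmk (X 2) * cmk ((X 2) ^ 2 + X 0 * X 2 + X 1) = 0 := by
    rw [← map_mul, ← hrel_factor]
    exact Ideal.Quotient.eq_zero_iff_mem.2 (Ideal.subset_span rfl)
  have haug : ∀ p, aug (cmk p) = (aeval (R := Zloc3) ![(X 0 : Rring), X 1, 0]) p :=
    fun p => rfl
  refine ⟨?_, ?_, ?_, ?_⟩
  · -- surjectivity
    intro y
    refine ⟨cmk (aeval (R := Zloc3) ![(X 0 : MvPolynomial (Fin 3) Zloc3), X 1] y), ?_⟩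
    rw [haug]
    have hid : ((aeval (R := Zloc3) ![(X 0 : Rring), X 1, 0]).comp
        (aeval (R := Zloc3) ![(X 0 : MvPolynomial (Fin 3) Zloc3), X 1])) = AlgHom.id _ _ := by
      apply MvPolynomial.algHom_ext
      intro i
      fin_cases i <;> simp
    exact congrArg (fun g => g y) hid
  · -- kernel of aug
    rw [aug]; erw [Ideal.ker_quotient_lift]; rw [ker_f, Ideal.map_span]
    simp
  · -- annihilator of r
    intro x
    obtain ⟨p, rfl⟩ := Ideal.Quotient.mk_surjective x
    constructor
    · intro h
      rw [show cmk p * cmk (X 2) = cmk (p * X 2) from rfl,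
        Ideal.Quotient.eq_zero_iff_mem, Ideal.mem_span_singleton] at h
      obtain ⟨c, hc⟩ := h
      rw [hrel_factor] at hc
      have hp : p = ((X 2) ^ 2 + X 0 * X 2 + X 1) * c :=
        mul_right_cancel₀ (X_ne_zero 2) (by linear_combination hc)
      rw [hp]; refine (Ideal.mem_span_singleton (α := Cring)).2 ?_
      exact ⟨cmk c, by rw [map_mul]⟩
    · intro h
      replace h := (Ideal.mem_span_singleton (α := Cring)).1 h
      obtain ⟨c, hc⟩ := h
      rw [hc]
      linear_combination c * h0
  · -- annihilator of r² + a₂r + a₄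
    intro x
    obtain ⟨p, rfl⟩ := Ideal.Quotient.mk_surjective x
    constructor
    · intro h
      rw [show cmk p * cmk ((X 2) ^ 2 + X 0 * X 2 + X 1)
          = cmk (p * ((X 2) ^ 2 + X 0 * X 2 + X 1)) from rfl,
        Ideal.Quotient.eq_zero_iff_mem, Ideal.mem_span_singleton] at h
      obtain ⟨c, hc⟩ := h
      rw [hrel_factor] at hc
      have hp : p = X 2 * c :=
        mul_right_cancel₀ hqne (by linear_combination hc)
      rw [hp]; refine (Ideal.mem_span_singleton (α := Cring)).2 ?_
      exact ⟨cmk c, by rw [map_mul]⟩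
    · intro h
      replace h := (Ideal.mem_span_singleton (α := Cring)).1 h
      obtain ⟨c, hc⟩ := h
      rw [hc]
      linear_combination c * h0
end

section
/- In the graded ring E = 𝔽₂[a₁, a₃][ζ^{±1}] with a derivation d of degree −1 satisfying d(a₁a₃) = 0, d(a₁²) = a₁³ζ³, d(a₃²) = a₁a₃²ζ³, d(a₃ζ) = a₁a₃ζ⁴, d(a₁ζ) = 0, d(ζ²) = a₁ζ⁵ (extended by the Leibniz rule to the even-weight subring), the homology of the even-weight part is the 𝔽₂-vector space spanned by the classes d_{0,m,i} = (a₃²)^m ζ^{2i} with m + i ≡ 0 (mod 2) and g_{0,m,i} = (a₃²)^m (a₃ζ) ζ^{2i} with m + i + 1 ≡ 0 (mod 2). -/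
noncomputable section

/-- The even-weight part of `𝔽₂[a₁,a₃][ζ^{±1}]`, as the free `𝔽₂`-module on the
basis `d_{n,m,i} = (a₁²)ⁿ(a₃²)^m ζ^{2i}`, `e_{n,m,i} = (a₁²)ⁿ(a₁a₃)(a₃²)^m ζ^{2i}`,
`f_{n,m,i} = (a₁²)ⁿ(a₃²)^m(a₁ζ)ζ^{2i}`, `g_{n,m,i} = (a₁²)ⁿ(a₃²)^m(a₃ζ)ζ^{2i}`,
indexed by `Fin 4 × ℕ × ℕ × ℤ` (first component `0,1,2,3` for `d,e,f,g`). -/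
abbrev V16 : Type := (Fin 4 × ℕ × ℕ × ℤ) →₀ ZMod 2

/-- The differential on basis elements: `d(d_{n,m,i}) = (n+m+i)·f_{n,m,i+1}`,
`d(e_{n,m,i}) = (n+m+i)·g_{n+1,m,i+1}`, `d(f_{n,m,i}) = (n+m+i)·d_{n+1,m,i+2}`,
`d(g_{n,m,i}) = (n+m+i+1)·e_{n,m,i+2}`, coefficients taken in `𝔽₂`. -/
def Dbasis : Fin 4 × ℕ × ℕ × ℤ → V16 := fun x =>
  match x with
  | (0, n, m, i) => (((n : ℤ) + m + i : ℤ) : ZMod 2) • Finsupp.single (2, n, m, i + 1) 1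
  | (1, n, m, i) => (((n : ℤ) + m + i : ℤ) : ZMod 2) • Finsupp.single (3, n + 1, m, i + 1) 1
  | (2, n, m, i) => (((n : ℤ) + m + i : ℤ) : ZMod 2) • Finsupp.single (0, n + 1, m, i + 2) 1
  | (3, n, m, i) => (((n : ℤ) + m + i + 1 : ℤ) : ZMod 2) • Finsupp.single (1, n, m, i + 2) 1

/-- The differential `D` (the `d³`-differential of the Tate spectral sequence for
`tmf₁(3)` on the even-weight part), extended `𝔽₂`-linearly from `Dbasis`. -/
def D16 : V16 →ₗ[ZMod 2] V16 := Finsupp.linearCombination (ZMod 2) Dbasis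

/-- The proposed homology classes: `d_{0,m,i} = (a₃²)^m ζ^{2i}` with `m + i ≡ 0 (mod 2)`
and `g_{0,m,i} = (a₃²)^m (a₃ζ) ζ^{2i}` with `m + i + 1 ≡ 0 (mod 2)`. -/
def homBasis16 : Set V16 :=
  {v | ∃ (m : ℕ) (i : ℤ), Even ((m : ℤ) + i) ∧ v = Finsupp.single (0, 0, m, i) 1} ∪
  {v | ∃ (m : ℕ) (i : ℤ), Even ((m : ℤ) + i + 1) ∧ v = Finsupp.single (3, 0, m, i) 1}

namespace Aux16

abbrev B := Fin 4 × ℕ × ℕ × ℤ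

def eps : B → ZMod 2 := fun x =>
  match x with
  | (0, n, m, i) => (((n : ℤ) + m + i : ℤ) : ZMod 2)
  | (1, n, m, i) => (((n : ℤ) + m + i : ℤ) : ZMod 2)
  | (2, n, m, i) => (((n : ℤ) + m + i : ℤ) : ZMod 2)
  | (3, n, m, i) => (((n : ℤ) + m + i + 1 : ℤ) : ZMod 2)

def tau : B → B := fun x =>
  match x with
  | (0, n, m, i) => (2, n, m, i + 1)
  | (1, n, m, i) => (3, n + 1, m, i + 1)
  | (2, n, m, i) => (0, n + 1, m, i + 2)
  | (3, n, m, i) => (1, n, m, i + 2)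

lemma Dbasis_eq (b : B) : Dbasis b = eps b • Finsupp.single (tau b) 1 := by
  obtain ⟨k, n, m, i⟩ := b
  fin_cases k <;> rfl

lemma tau_inj : Function.Injective tau := by
  rintro ⟨k, n, m, i⟩ ⟨k', n', m', i'⟩ h
  fin_cases k <;> fin_cases k' <;>
    simp_all [tau, Prod.ext_iff]

lemma zmod2_cast_eq_zero (x : ℤ) : ((x : ZMod 2) = 0) ↔ Even x := by
  rw [ZMod.intCast_zmod_eq_zero_iff_dvd, Int.even_iff]
  push_cast
  omega

lemma zmod2_ne_zero {c : ZMod 2} (h : c ≠ 0) : c = 1 := by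
  revert h; revert c; decide

/-- source set -/
def S : Set B := {b | eps b ≠ 0}
/-- target set -/
def T : Set B := tau '' S
/-- homology index set -/
def H : Set B :=
  {b | ∃ (m : ℕ) (i : ℤ), Even ((m : ℤ) + i) ∧ b = (0, 0, m, i)} ∪
  {b | ∃ (m : ℕ) (i : ℤ), Even ((m : ℤ) + i + 1) ∧ b = (3, 0, m, i)}

lemma mem_T_iff (b : B) : b ∈ T ↔ ∃ a, eps a ≠ 0 ∧ tau a = b := by
  simp [T, S, Set.mem_image]

lemma eps_eq_zero_iff_mem (b : B) : eps b = 0 ↔ b ∈ T ∪ H := by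
  obtain ⟨k, n, m, i⟩ := b
  constructor
  · intro h
    fin_cases k
    · -- k = 0 : Even (n+m+i)
      replace h : (((n : ℤ) + m + i : ℤ) : ZMod 2) = 0 := h
      rw [zmod2_cast_eq_zero] at h
      rcases Nat.eq_zero_or_pos n with hn | hn
      · right; left; exact ⟨m, i, by subst hn; simpa using h, by simp [hn]⟩
      · left
        rw [mem_T_iff]
        refine ⟨(2, n - 1, m, i - 2), ?_, ?_⟩
        · show ¬ (((((n-1 : ℕ) : ℤ) + (m : ℤ) + (i-2) : ℤ)) : ZMod 2) = 0
          rw [zmod2_cast_eq_zero]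
          rw [Int.even_iff] at h ⊢; omega
        · simp only [tau, Prod.mk.injEq]
          and_intros <;> first | trivial | omega
    · -- k = 1
      replace h : (((n : ℤ) + m + i : ℤ) : ZMod 2) = 0 := h
      rw [zmod2_cast_eq_zero] at h
      left; rw [mem_T_iff]
      refine ⟨(3, n, m, i - 2), ?_, ?_⟩
      · show ¬ ((((n : ℤ) + (m : ℤ) + (i-2) + 1 : ℤ)) : ZMod 2) = 0
        rw [zmod2_cast_eq_zero]
        rw [Int.even_iff] at h ⊢; omega
      · simp only [tau, Prod.mk.injEq]
        and_intros <;> first | trivial | omega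
    · -- k = 2
      replace h : (((n : ℤ) + m + i : ℤ) : ZMod 2) = 0 := h
      rw [zmod2_cast_eq_zero] at h
      left; rw [mem_T_iff]
      refine ⟨(0, n, m, i - 1), ?_, ?_⟩
      · show ¬ ((((n : ℤ) + (m : ℤ) + (i-1) : ℤ)) : ZMod 2) = 0
        rw [zmod2_cast_eq_zero]
        rw [Int.even_iff] at h ⊢; omega
      · simp only [tau, Prod.mk.injEq]
        and_intros <;> first | trivial | omega
    · -- k = 3 : Even (n+m+i+1)
      replace h : (((n : ℤ) + m + i + 1 : ℤ) : ZMod 2) = 0 := h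
      rw [zmod2_cast_eq_zero] at h
      rcases Nat.eq_zero_or_pos n with hn | hn
      · right; right
        exact ⟨m, i, by subst hn; simpa using h, by simp [hn]⟩
      · left; rw [mem_T_iff]
        refine ⟨(1, n - 1, m, i - 1), ?_, ?_⟩
        · show ¬ (((((n-1 : ℕ) : ℤ) + (m : ℤ) + (i-1) : ℤ)) : ZMod 2) = 0
          rw [zmod2_cast_eq_zero]
          rw [Int.even_iff] at h ⊢; omega
        · simp only [tau, Prod.mk.injEq]
          and_intros <;> first | trivial | omega
  · rintro (hT | hH)
    · rw [mem_T_iff] at hT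
      obtain ⟨⟨k', n', m', i'⟩, ha, hb⟩ := hT
      have ha' : eps (k', n', m', i') = 1 := zmod2_ne_zero ha
      fin_cases k' <;>
      · simp only [tau] at hb
        rw [← hb]
        simp only [eps] at ha' ⊢
        rw [zmod2_cast_eq_zero]
        rw [show (1 : ZMod 2) = ((1 : ℤ) : ZMod 2) from rfl] at ha'
        have := (ZMod.intCast_eq_intCast_iff' _ _ _).mp ha'
        push_cast at this ⊢
        rw [Int.even_iff]; omega
    · rcases hH with ⟨m', i', he, hb⟩ | ⟨m', i', he, hb⟩ <;>
      · rw [hb]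
        simp only [eps]
        rw [zmod2_cast_eq_zero]
        simpa using he

lemma D16_apply_tau (v : V16) (b : B) : (D16 v) (tau b) = v b * eps b := by
  rw [D16, Finsupp.linearCombination_apply, Finsupp.sum_apply, Finsupp.sum]
  refine (Finset.sum_eq_single b ?_ ?_).trans ?_
  · intro b' _ hne
    rw [Dbasis_eq]
    simp [Finsupp.single_apply, tau_inj.ne hne]
  · intro hb
    simp [Finsupp.notMem_support_iff.mp hb]
  · rw [Dbasis_eq]
    simp [Finsupp.single_apply, mul_comm]

lemma ker_eq :
    LinearMap.ker D16 = Finsupp.supported (ZMod 2) (ZMod 2) {b : B | eps b = 0} := by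
  ext v
  simp only [LinearMap.mem_ker, Finsupp.mem_supported]
  constructor
  · intro hv b hb
    by_contra hne
    have h1 := D16_apply_tau v b
    rw [hv] at h1
    simp only [Finsupp.coe_zero, Pi.zero_apply] at h1
    rcases mul_eq_zero.mp h1.symm with h | h
    · exact (Finsupp.mem_support_iff.mp hb) h
    · exact hne h
  · intro hv
    rw [D16, Finsupp.linearCombination_apply, Finsupp.sum]
    apply Finset.sum_eq_zero
    intro b hb
    rw [Dbasis_eq, show eps b = 0 from hv hb, zero_smul, smul_zero]

lemma range_eq : LinearMap.range D16 = Finsupp.supported (ZMod 2) (ZMod 2) T := by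
  rw [D16, Finsupp.range_linearCombination]
  apply le_antisymm
  · rw [Submodule.span_le]
    rintro _ ⟨b, rfl⟩
    rcases eq_or_ne (eps b) 0 with h | h
    · rw [Dbasis_eq, h, zero_smul]
      exact Submodule.zero_mem _
    · rw [Dbasis_eq, zmod2_ne_zero h, one_smul, SetLike.mem_coe, Finsupp.mem_supported]
      intro x hx
      have hx' : x = tau b := Finset.mem_singleton.mp (Finsupp.support_single_subset hx)
      exact hx' ▸ ⟨b, h, rfl⟩
  · rw [Finsupp.supported_eq_span_single, Submodule.span_le]
    rintro _ ⟨t, ⟨a, ha, rfl⟩, rfl⟩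
    apply Submodule.subset_span
    exact ⟨a, by rw [Dbasis_eq, zmod2_ne_zero ha, one_smul]⟩

lemma homBasis_eq_image : homBasis16 = (fun b : B => Finsupp.single b (1 : ZMod 2)) '' H := by
  ext v
  simp only [homBasis16, H, Set.mem_union, Set.mem_image, Set.mem_setOf_eq]
  constructor
  · rintro (⟨m, i, he, rfl⟩ | ⟨m, i, he, rfl⟩)
    · exact ⟨(0, 0, m, i), Or.inl ⟨m, i, he, rfl⟩, rfl⟩
    · exact ⟨(3, 0, m, i), Or.inr ⟨m, i, he, rfl⟩, rfl⟩
  · rintro ⟨b, (⟨m, i, he, rfl⟩ | ⟨m, i, he, rfl⟩), rfl⟩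
    · exact Or.inl ⟨m, i, he, rfl⟩
    · exact Or.inr ⟨m, i, he, rfl⟩

lemma span_homBasis_eq :
    Submodule.span (ZMod 2) homBasis16 = Finsupp.supported (ZMod 2) (ZMod 2) H := by
  rw [homBasis_eq_image, Finsupp.supported_eq_span_single]

lemma disjoint_H_T : Disjoint H T := by
  rw [Set.disjoint_left]
  rintro b (⟨m, i, _, rfl⟩ | ⟨m, i, _, rfl⟩) ⟨⟨k', n', m', i'⟩, _, hb⟩ <;>
    fin_cases k' <;> simp_all [tau, Prod.ext_iff]

lemma indep : LinearIndependent (ZMod 2) ((↑) : homBasis16 → V16) := by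
  have h1 : LinearIndependent (ZMod 2) (fun b : B => Finsupp.single b (1 : ZMod 2)) := by
    simpa [Finsupp.coe_basisSingleOne] using
      (Finsupp.basisSingleOne (R := ZMod 2) (ι := B)).linearIndependent
  refine (LinearIndepOn.mono (s := Set.range (fun b : B => Finsupp.single b (1 : ZMod 2))) (v := id) h1.linearIndepOn_id ?_ :
    LinearIndepOn (ZMod 2) id homBasis16)
  rw [homBasis_eq_image]
  exact Set.image_subset_range _ _

end Aux16

/-- The homology `ker D / im D` of the differential `D` on the even-weight part of
`𝔽₂[a₁,a₃][ζ^{±1}]` is the `𝔽₂`-vector space with basis the classes of the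
`d_{0,m,i}` with `m+i ≡ 0 (mod 2)` and the `g_{0,m,i}` with `m+i+1 ≡ 0 (mod 2)`:
these elements are linearly independent, their span meets the image of `D`
trivially, and together with the image of `D` they span the kernel of `D`. -/
theorem stmt16 :
    LinearMap.ker D16 = LinearMap.range D16 ⊔ Submodule.span (ZMod 2) homBasis16 ∧
    Disjoint (Submodule.span (ZMod 2) homBasis16) (LinearMap.range D16) ∧
    LinearIndependent (ZMod 2) ((↑) : homBasis16 → V16) := by
  have hker : LinearMap.ker D16
      = Finsupp.supported (ZMod 2) (ZMod 2) (Aux16.T ∪ Aux16.H) := by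
    rw [Aux16.ker_eq]
    congr 1
    ext b
    exact Aux16.eps_eq_zero_iff_mem b
  refine ⟨?_, ?_, Aux16.indep⟩
  · rw [hker, Finsupp.supported_union, Aux16.range_eq, Aux16.span_homBasis_eq]
  · rw [Aux16.range_eq, Aux16.span_homBasis_eq]
    exact Finsupp.disjoint_supported_supported Aux16.disjoint_H_T

end
end
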